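/- Let X be a finite metric space with m ≥ 2 points and mst-spectrum σ(X) = (σ₁,…,σ_{m−1}) (edge lengths of a minimal spanning tree in descending order). Then for every λ ≥ 2·diam X and every 1 ≤ k ≤ m−1, 2·d_GH(λΔ_{k+1}, X) = λ − σ_k. -/

import Mathlib

/-- `Δ` is a simplex of cardinality `n` and non-zero distance `l`. -/
def IsSimplexOf (Δ : Type) [MetricSpace Δ] [Fintype Δ] (n : ℕ) (l : ℝ) : Prop :=
  Fintype.card Δ = n ∧ ∀ x y : Δ, x ≠ y → dist x y = l

/-- The multiset of edge lengths of a graph `G` on a finite metric space `V`. -/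
noncomputable def edgeLengths {V : Type} [MetricSpace V] [Fintype V] (G : SimpleGraph V) :
    Multiset ℝ :=
  (G.edgeSet.toFinite.toFinset).val.map
    (Sym2.lift ⟨fun x y => dist x y, fun _ _ => dist_comm _ _⟩)

/-- The length of a graph `G` on a finite metric space: the sum of the lengths of its edges. -/
noncomputable def graphLength {V : Type} [MetricSpace V] [Fintype V] (G : SimpleGraph V) : ℝ :=
  (edgeLengths G).sum

/-- `G` is a minimal spanning tree on the finite metric space `V`: a tree with vertex set `V`
whose length is minimal among all such trees. -/
def IsMST {V : Type} [MetricSpace V] [Fintype V] (G : SimpleGraph V) : Prop :=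
  G.IsTree ∧ ∀ H : SimpleGraph V, H.IsTree → graphLength G ≤ graphLength H


open SimpleGraph Metric GromovHausdorff

variable {V : Type}

lemma reach_of_adj_reach {G H : SimpleGraph V}
    (h : ∀ u v, G.Adj u v → H.Reachable u v) {x y : V} (hr : G.Reachable x y) :
    H.Reachable x y := by
  obtain ⟨w⟩ := hr
  induction w with
  | nil => exact Reachable.refl _
  | cons ha _ ih => exact (h _ _ ha).trans ih

lemma split_at_edge {G : SimpleGraph V} {a b : V} :
    ∀ {u v : V} (p : G.Walk u v), p.IsTrail → s(a, b) ∈ p.edges →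
      ((G.deleteEdges {s(a, b)}).Reachable u a ∧ (G.deleteEdges {s(a, b)}).Reachable b v) ∨
      ((G.deleteEdges {s(a, b)}).Reachable u b ∧ (G.deleteEdges {s(a, b)}).Reachable a v) := by
  intro u v p
  induction p with
  | nil => intro _ he; simp at he
  | @cons u w v ha p ih =>
    intro ht he
    rw [Walk.isTrail_cons] at ht
    rw [Walk.edges_cons, List.mem_cons] at he
    rcases he with he | he
    · -- the first edge is s(a,b)
      have hp' : ∀ e ∈ p.edges, e ∉ ({s(a, b)} : Set (Sym2 V)) := by
        intro e hep hes
        rw [Set.mem_singleton_iff] at hes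
        subst hes
        exact ht.2 (by rwa [he] at hep)
      have hwv : (G.deleteEdges {s(a, b)}).Reachable w v :=
        ⟨p.toDeleteEdges {s(a, b)} hp'⟩
      rw [Sym2.eq_iff] at he
      rcases he with ⟨rfl, rfl⟩ | ⟨rfl, rfl⟩
      · exact Or.inl ⟨Reachable.refl _, hwv⟩
      · exact Or.inr ⟨Reachable.refl _, hwv⟩
    · have hne : s(u, w) ≠ s(a, b) := by
        intro hh; exact ht.2 (by rw [hh]; exact he)
      have hadj : (G.deleteEdges {s(a, b)}).Adj u w :=
        deleteEdges_adj.mpr ⟨ha, by simpa using hne⟩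
      rcases ih ht.1 he with ⟨h1, h2⟩ | ⟨h1, h2⟩
      · exact Or.inl ⟨hadj.reachable.trans h1, h2⟩
      · exact Or.inr ⟨hadj.reachable.trans h1, h2⟩

lemma reach_delete_cases {G : SimpleGraph V} {a b : V} {u v : V}
    (h : G.Reachable u v) :
    (G.deleteEdges {s(a, b)}).Reachable u v ∨
    ((G.deleteEdges {s(a, b)}).Reachable u a ∧ (G.deleteEdges {s(a, b)}).Reachable v b) ∨
    ((G.deleteEdges {s(a, b)}).Reachable u b ∧ (G.deleteEdges {s(a, b)}).Reachable v a) := by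
  obtain ⟨w⟩ := h
  induction w with
  | nil => exact Or.inl (Reachable.refl _)
  | @cons u w v ha p ih =>
    by_cases he : s(u, w) = s(a, b)
    · rw [Sym2.eq_iff] at he
      rcases he with ⟨rfl, rfl⟩ | ⟨rfl, rfl⟩
      · -- u = a, w = b
        rcases ih with h1 | ⟨h1, h2⟩ | ⟨h1, h2⟩
        · exact Or.inr (Or.inl ⟨Reachable.refl _, h1.symm⟩)
        · exact Or.inl (h1.symm.trans h2.symm)
        · exact Or.inl h2.symm
      · -- u = b, w = a
        rcases ih with h1 | ⟨h1, h2⟩ | ⟨h1, h2⟩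
        · exact Or.inr (Or.inr ⟨Reachable.refl _, h1.symm⟩)
        · exact Or.inl h2.symm
        · exact Or.inl (h1.symm.trans h2.symm)
    · have hadj : (G.deleteEdges {s(a, b)}).Adj u w :=
        deleteEdges_adj.mpr ⟨ha, by simpa using he⟩
      rcases ih with h1 | ⟨h1, h2⟩ | ⟨h1, h2⟩
      · exact Or.inl (hadj.reachable.trans h1)
      · exact Or.inr (Or.inl ⟨hadj.reachable.trans h1, h2⟩)
      · exact Or.inr (Or.inr ⟨hadj.reachable.trans h1, h2⟩)

section comps
variable [Fintype V]

noncomputable local instance (G : SimpleGraph V) : Fintype G.ConnectedComponent :=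
  Fintype.ofFinite _

/-- deleting one edge increases the number of components by at most one -/
lemma card_cc_delete_le (G : SimpleGraph V) (e : Sym2 V) :
    Fintype.card (G.deleteEdges {e}).ConnectedComponent ≤
      Fintype.card G.ConnectedComponent + 1 := by
  classical
  induction e with
  | _ a b =>
  set G' := G.deleteEdges {s(a, b)} with hG'
  let m : G'.ConnectedComponent → G.ConnectedComponent :=
    ConnectedComponent.map (Hom.ofLE (deleteEdges_le _))
  have hm : ∀ v : V, m (G'.connectedComponentMk v) = G.connectedComponentMk v := fun v => rfl
  have key : ∀ C C' : G'.ConnectedComponent, m C = m C' → C = C' ∨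
      (C = G'.connectedComponentMk a ∧ C' = G'.connectedComponentMk b) ∨
      (C = G'.connectedComponentMk b ∧ C' = G'.connectedComponentMk a) := by
    intro C C'
    refine ConnectedComponent.ind₂ (fun u v h => ?_) C C'
    rw [hm, hm, ConnectedComponent.eq] at h
    rcases reach_delete_cases (a := a) (b := b) h with h1 | ⟨h1, h2⟩ | ⟨h1, h2⟩
    · exact Or.inl (ConnectedComponent.eq.mpr h1)
    · exact Or.inr (Or.inl ⟨ConnectedComponent.eq.mpr h1, ConnectedComponent.eq.mpr h2⟩)
    · exact Or.inr (Or.inr ⟨ConnectedComponent.eq.mpr h1, ConnectedComponent.eq.mpr h2⟩)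
  let g : G'.ConnectedComponent → Option G.ConnectedComponent := fun C =>
    if C = G'.connectedComponentMk b then none else some (m C)
  have hg : Function.Injective g := by
    intro C C' h
    by_cases hC : C = G'.connectedComponentMk b <;>
      by_cases hC' : C' = G'.connectedComponentMk b <;>
      simp only [g, hC, hC', if_pos, if_neg, reduceIte] at h
    · exact hC.trans hC'.symm
    · exact absurd h (by simp)
    · exact absurd h (by simp)
    · rcases key C C' (Option.some_injective _ h) with h1 | ⟨h1, h2⟩ | ⟨h1, h2⟩
      · exact h1
      · exact absurd h2 hC'
      · exact absurd h1 hC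
  calc Fintype.card G'.ConnectedComponent ≤ Fintype.card (Option G.ConnectedComponent) :=
        Fintype.card_le_of_injective g hg
    _ = Fintype.card G.ConnectedComponent + 1 := Fintype.card_option

/-- deleting a bridge increases the number of components -/
lemma card_cc_delete_bridge (G : SimpleGraph V) {a b : V} (hab : G.Adj a b)
    (hbr : ¬ (G.deleteEdges {s(a, b)}).Reachable a b) :
    Fintype.card G.ConnectedComponent + 1 ≤
      Fintype.card (G.deleteEdges {s(a, b)}).ConnectedComponent := by
  classical
  set G' := G.deleteEdges {s(a, b)} with hG'
  let m : G'.ConnectedComponent → G.ConnectedComponent :=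
    ConnectedComponent.map (Hom.ofLE (deleteEdges_le _))
  have hm : ∀ v : V, m (G'.connectedComponentMk v) = G.connectedComponentMk v := fun v => rfl
  have hsurj : Function.Surjective m := by
    intro C
    refine ConnectedComponent.ind (fun v => ?_) C
    exact ⟨G'.connectedComponentMk v, hm v⟩
  let h := Function.surjInv hsurj
  have hinj : Function.Injective h := Function.injective_surjInv hsurj
  have hne : G'.connectedComponentMk a ≠ G'.connectedComponentMk b := by
    rw [Ne, ConnectedComponent.eq]; exact hbr
  have hmeq : m (G'.connectedComponentMk a) = m (G'.connectedComponentMk b) := by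
    rw [hm, hm, ConnectedComponent.eq]; exact hab.reachable
  have : G'.connectedComponentMk a ∉ Set.range h ∨ G'.connectedComponentMk b ∉ Set.range h := by
    by_contra hcon
    push_neg at hcon
    obtain ⟨⟨u, hu⟩, ⟨u', hu'⟩⟩ := hcon
    have h1 : m (G'.connectedComponentMk a) = u := by
      rw [← hu]; exact Function.surjInv_eq hsurj u
    have h2 : m (G'.connectedComponentMk b) = u' := by
      rw [← hu']; exact Function.surjInv_eq hsurj u'
    have : u = u' := by rw [← h1, ← h2, hmeq]
    exact hne (by rw [← hu, ← hu', this])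
  rcases this with hmem | hmem
  · exact Fintype.card_lt_of_injective_of_notMem h hinj hmem
  · exact Fintype.card_lt_of_injective_of_notMem h hinj hmem

/-- iterated: number of components of `G` minus a finite set of edges is at most `card S + 1` -/
lemma card_cc_deleteEdges_le (G : SimpleGraph V) (hG : G.Connected) (S : Finset (Sym2 V)) :
    Fintype.card (G.deleteEdges ↑S).ConnectedComponent ≤ S.card + 1 := by
  classical
  induction S using Finset.induction_on with
  | empty =>
    simp only [Finset.coe_empty, deleteEdges_empty, Finset.card_empty]
    have : Subsingleton G.ConnectedComponent := by
      constructor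
      intro C C'
      refine ConnectedComponent.ind₂ (fun u v => ?_) C C'
      exact ConnectedComponent.eq.mpr (hG.preconnected u v)
    calc Fintype.card G.ConnectedComponent ≤ 1 := Fintype.card_le_one_iff_subsingleton.mpr this
      _ ≤ 0 + 1 := le_refl _
  | @insert e S he ih =>
    have hdel : G.deleteEdges ↑(insert e S) = (G.deleteEdges ↑S).deleteEdges {e} := by
      rw [deleteEdges_deleteEdges, Finset.coe_insert]
      congr 1
      rw [Set.union_comm, Set.insert_eq]
    rw [hdel]
    calc Fintype.card ((G.deleteEdges ↑S).deleteEdges {e}).ConnectedComponent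
        ≤ Fintype.card (G.deleteEdges ↑S).ConnectedComponent + 1 := card_cc_delete_le _ e
      _ ≤ (S.card + 1) + 1 := Nat.add_le_add_right ih 1
      _ = (insert e S).card + 1 := by rw [Finset.card_insert_of_notMem he]

/-- iterated: deleting `S` edges from a tree gives at least `card S + 1` components -/
lemma card_cc_deleteEdges_ge (G : SimpleGraph V) (hG : G.IsTree) (S : Finset (Sym2 V))
    (hS : ↑S ⊆ G.edgeSet) :
    S.card + 1 ≤ Fintype.card (G.deleteEdges ↑S).ConnectedComponent := by
  classical
  induction S using Finset.induction_on with
  | empty =>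
    simp only [Finset.coe_empty, deleteEdges_empty, Finset.card_empty]
    have : Nonempty G.ConnectedComponent := by
      obtain ⟨v⟩ := hG.isConnected.nonempty
      exact ⟨G.connectedComponentMk v⟩
    exact Fintype.card_pos
  | @insert e S he ih =>
    have hSsub : ↑S ⊆ G.edgeSet := by
      refine subset_trans ?_ hS
      rw [Finset.coe_insert]; exact Set.subset_insert _ _
    have heG : e ∈ G.edgeSet := hS (by rw [Finset.coe_insert]; exact Set.mem_insert _ _)
    have heS : e ∉ ↑S := he
    have hdel : G.deleteEdges ↑(insert e S) = (G.deleteEdges ↑S).deleteEdges {e} := by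
      rw [deleteEdges_deleteEdges, Finset.coe_insert]
      congr 1
      rw [Set.union_comm, Set.insert_eq]
    rw [hdel, Finset.card_insert_of_notMem he]
    induction e with
    | _ a b =>
    have hadj : (G.deleteEdges ↑S).Adj a b := by
      rw [deleteEdges_adj]
      exact ⟨G.mem_edgeSet.mp heG, heS⟩
    have hbridge : G.IsBridge s(a, b) := by
      have := isAcyclic_iff_forall_edge_isBridge.mp hG.IsAcyclic heG
      exact this
    have hnr : ¬ ((G.deleteEdges ↑S).deleteEdges {s(a, b)}).Reachable a b := by
      intro hr
      have hle : (G.deleteEdges ↑S).deleteEdges {s(a, b)} ≤ G.deleteEdges {s(a, b)} := by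
        rw [deleteEdges_deleteEdges]
        exact deleteEdges_anti (by intro t ht; exact Set.mem_union_right _ ht)
      exact (isBridge_iff.mp hbridge) (hr.mono hle)
    calc S.card + 1 + 1 ≤ Fintype.card (G.deleteEdges ↑S).ConnectedComponent + 1 :=
          Nat.add_le_add_right (ih hSsub) 1
      _ ≤ Fintype.card ((G.deleteEdges ↑S).deleteEdges {s(a, b)}).ConnectedComponent :=
          card_cc_delete_bridge _ hadj hnr
end comps


lemma isAcyclic_sup_edge {G : SimpleGraph V} (hG : G.IsAcyclic) {x y : V}
    (hxy : ¬G.Reachable x y) (hne : x ≠ y) :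
    (G ⊔ fromEdgeSet {s(x, y)}).IsAcyclic := by
  classical
  rw [isAcyclic_iff_forall_edge_isBridge]
  intro e he
  induction e with
  | _ u v =>
  set G' := G ⊔ fromEdgeSet {s(x, y)} with hG'def
  have hle_del : ∀ (s : Set (Sym2 V)), s(x, y) ∈ s → G'.deleteEdges s ≤ G := by
    intro s hs p q hadj
    rw [deleteEdges_adj] at hadj
    rcases (sup_adj _ _ _ _).mp hadj.1 with h | h
    · exact h
    · rw [fromEdgeSet_adj] at h
      exact absurd (h.1.symm ▸ hs : s(p, q) ∈ s) hadj.2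
  have hGuv : G'.Adj u v := G'.mem_edgeSet.mp he
  rw [isBridge_iff]
  intro hr
  by_cases hcase : s(u, v) = s(x, y)
  · -- removing the new edge leaves a subgraph of G
    have hle : G' \ fromEdgeSet {s(u, v)} ≤ G := hle_del {s(u, v)} (by simp [hcase])
    have : G.Reachable u v := hr.mono hle
    rw [Sym2.eq_iff] at hcase
    rcases hcase with ⟨rfl, rfl⟩ | ⟨rfl, rfl⟩
    · exact hxy this
    · exact hxy this.symm
  · -- an old edge
    have heG : s(u, v) ∈ G.edgeSet := by
      have := he
      rw [hG'def, edgeSet_sup, edgeSet_fromEdgeSet] at this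
      rcases this with h | h
      · exact h
      · exact absurd h.1 (by simpa using hcase)
    have hbr : G.IsBridge s(u, v) := isAcyclic_iff_forall_edge_isBridge.mp hG heG
    obtain ⟨w⟩ := hr
    set p : (G' \ fromEdgeSet {s(u, v)}).Walk u v :=
      (w.toPath : (G'.deleteEdges {s(u, v)}).Walk u v) with hpdef
    have hppath : p.IsPath := w.toPath.isPath
    have hGadj : G.Adj u v := G.mem_edgeSet.mp heG
    have hle2 : (G' \ fromEdgeSet {s(u, v)}).deleteEdges {s(x, y)} ≤ G := by
      have heq : (G'.deleteEdges {s(u, v)}).deleteEdges {s(x, y)} =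
          G'.deleteEdges ({s(u, v)} ∪ {s(x, y)}) := by rw [deleteEdges_deleteEdges]
      exact le_of_eq_of_le heq (hle_del _ (Set.mem_union_right _ rfl))
    by_cases hf : s(x, y) ∈ p.edges
    · -- the walk uses the new edge; split at it
      rcases split_at_edge p hppath.isTrail hf with ⟨h1, h2⟩ | ⟨h1, h2⟩
      · exact hxy ((h1.mono hle2).symm.trans (hGadj.reachable.trans (h2.mono hle2).symm))
      · exact hxy ((h2.mono hle2).trans (hGadj.symm.reachable.trans (h1.mono hle2)))
    · -- the walk avoids the new edge: it lives in G \ uv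
      have hsub : ∀ ed ∈ p.edges, ed ∈ (G.deleteEdges {s(u, v)}).edgeSet := by
        intro ed hed
        have h1 : ed ∈ (G' \ fromEdgeSet {s(u, v)}).edgeSet := Walk.edges_subset_edgeSet _ hed
        have h2 : ed ≠ s(x, y) := fun hh => hf (hh ▸ hed)
        rw [edgeSet_sdiff, edgeSet_fromEdgeSet, hG'def, edgeSet_sup, edgeSet_fromEdgeSet] at h1
        rw [edgeSet_deleteEdges]
        obtain ⟨hmem, hnot⟩ := h1
        have hned : ed ≠ s(u, v) := by
          intro hh
          apply hnot
          refine ⟨by simp [hh], ?_⟩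
          simp only [hh, Sym2.mem_diagSet, Sym2.mk_isDiag_iff]
          exact hGuv.ne
        rcases hmem with h | h
        · exact ⟨h, by simpa using hned⟩
        · exact absurd h.1 (by simpa using h2)
      have : (G.deleteEdges {s(u, v)}).Reachable u v := ⟨p.transfer _ hsub⟩
      exact isBridge_iff.mp hbr this

lemma tree_exchange {G : SimpleGraph V} (hG : G.IsTree) {x y a b : V}
    (p : G.Walk x y) (hp : p.IsPath) (he : s(a, b) ∈ p.edges)
    (hnadj : ¬ G.Adj x y) (hnexy : x ≠ y) :
    ((G.deleteEdges {s(a, b)}) ⊔ fromEdgeSet {s(x, y)}).IsTree := by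
  classical
  set T' := (G.deleteEdges {s(a, b)}) ⊔ fromEdgeSet {s(x, y)} with hT'def
  have habG : s(a, b) ∈ G.edgeSet := p.edges_subset_edgeSet he
  have hbr : G.IsBridge s(a, b) :=
    isAcyclic_iff_forall_edge_isBridge.mp hG.IsAcyclic habG
  -- the deleted graph is acyclic
  have hacyc_del : (G.deleteEdges {s(a, b)}).IsAcyclic := by
    rw [isAcyclic_iff_forall_edge_isBridge]
    intro g hg
    induction g with
    | _ u v =>
    rw [edgeSet_deleteEdges] at hg
    have hbru : G.IsBridge s(u, v) := isAcyclic_iff_forall_edge_isBridge.mp hG.IsAcyclic hg.1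
    rw [isBridge_iff]
    intro hr
    apply isBridge_iff.mp hbru
    refine hr.mono ?_
    intro pp qq hadj
    rw [deleteEdges_adj] at hadj ⊢
    exact ⟨(deleteEdges_adj.mp hadj.1).1, hadj.2⟩
  -- x and y are not reachable after deleting s(a,b)
  have hxyd : ¬ (G.deleteEdges {s(a, b)}).Reachable x y := by
    intro hr
    obtain ⟨q⟩ := hr
    set q' : (G.deleteEdges {s(a, b)}).Walk x y := ↑q.toPath with hq'
    have hq'path : q'.IsPath := q.toPath.isPath
    have hsub : ∀ e ∈ q'.edges, e ∈ G.edgeSet := fun e he' =>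
      ((edgeSet_deleteEdges _ ▸ Walk.edges_subset_edgeSet q' he') :
        e ∈ G.edgeSet \ {s(a, b)}).1
    have htr : (q'.transfer G hsub).IsPath := hq'path.transfer _
    obtain ⟨pp, _, huniq⟩ := hG.existsUnique_path x y
    have h1 : p = pp := huniq p hp
    have h2 : q'.transfer G hsub = pp := huniq _ htr
    have : s(a, b) ∈ q'.edges := by
      rw [← Walk.edges_transfer q' hsub, h2, ← h1]
      exact he
    have := Walk.edges_subset_edgeSet q' this
    rw [edgeSet_deleteEdges] at this
    exact this.2 rfl
  -- connectivity
  have hle : G.deleteEdges {s(a, b)} ≤ T' := le_sup_left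
  have hfadj : T'.Adj x y := (sup_adj _ _ _ _).mpr (Or.inr ((fromEdgeSet_adj _).mpr ⟨rfl, hnexy⟩))
  have hreach_ab : T'.Reachable a b := by
    rcases split_at_edge p hp.isTrail he with ⟨h1, h2⟩ | ⟨h1, h2⟩
    · exact (h1.mono hle).symm.trans (hfadj.reachable.trans (h2.mono hle).symm)
    · exact (h2.mono hle).trans (hfadj.reachable.symm.trans (h1.mono hle))
  have hadjstep : ∀ u v, G.Adj u v → T'.Reachable u v := by
    intro u v huv
    by_cases hcase : s(u, v) = s(a, b)
    · rw [Sym2.eq_iff] at hcase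
      rcases hcase with ⟨rfl, rfl⟩ | ⟨rfl, rfl⟩
      · exact hreach_ab
      · exact hreach_ab.symm
    · exact (hle (deleteEdges_adj.mpr ⟨huv, by simpa using hcase⟩)).reachable
  have hnV : Nonempty V := hG.isConnected.nonempty
  have hconn : T'.Connected := by
    constructor
    intro u v
    exact reach_of_adj_reach hadjstep (hG.isConnected.preconnected u v)
  exact IsTree.mk hconn (isAcyclic_sup_edge hacyc_del hxyd hnexy)


lemma coe_split (L : List ℝ) (i : ℕ) :
    (↑L : Multiset ℝ) = ↑(L.take i) + ↑(L.drop i) := by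
  have hL : L = L.take i ++ L.drop i := (List.take_append_drop i L).symm
  conv_lhs => rw [hL]
  rfl

/-- In a descending sorted list, if at least `i+1` elements are `≥ δ`, then the element
at index `i` is `≥ δ`. -/
lemma sorted_ge_of_countP_ge (L : List ℝ) (hs : L.Pairwise (· ≥ ·)) (i : ℕ) (hi : i < L.length)
    (δ : ℝ) (h : i + 1 ≤ Multiset.countP (fun x => δ ≤ x) (↑L : Multiset ℝ)) :
    δ ≤ L.get ⟨i, hi⟩ := by
  classical
  by_contra hcon
  push_neg at hcon
  have h1 : Multiset.countP (fun x => δ ≤ x) (↑(L.take i) : Multiset ℝ) ≤ i := by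
    calc Multiset.countP (fun x => δ ≤ x) (↑(L.take i) : Multiset ℝ)
        ≤ Multiset.card (↑(L.take i) : Multiset ℝ) := Multiset.countP_le_card _ _
      _ ≤ i := by simp [List.length_take]
  have h2 : Multiset.countP (fun x => δ ≤ x) (↑(L.drop i) : Multiset ℝ) = 0 := by
    rw [Multiset.countP_eq_zero]
    intro a ha
    rw [Multiset.mem_coe, List.mem_iff_getElem] at ha
    obtain ⟨j, hj, hja⟩ := ha
    have hij : i + j < L.length := by rw [List.length_drop] at hj; omega
    have hja' : L[i + j]'hij = a := by rw [← hja, List.getElem_drop]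
    have hle : L[i + j]'hij ≤ L.get ⟨i, hi⟩ := by
      rcases Nat.eq_or_lt_of_le (Nat.le_add_right i j) with heq | hlt
      · simp only [List.get_eq_getElem]
        exact le_of_eq (by congr 1; omega)
      · exact hs.rel_get_of_lt (by simpa using hlt)
    rw [hja'] at hle
    intro hda
    exact absurd (le_trans hda hle) (not_le.mpr hcon)
  rw [coe_split L i, Multiset.countP_add, h2] at h
  omega

/-- In a descending sorted list, if at most `i` elements are `> v`, then the element
at index `i` is `≤ v`. -/
lemma sorted_le_of_countP_le (L : List ℝ) (hs : L.Pairwise (· ≥ ·)) (i : ℕ) (hi : i < L.length)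
    (v : ℝ) (h : Multiset.countP (fun x => v < x) (↑L : Multiset ℝ) ≤ i) :
    L.get ⟨i, hi⟩ ≤ v := by
  classical
  by_contra hcon
  push_neg at hcon
  have h1 : Multiset.countP (fun x => v < x) (↑(L.take (i + 1)) : Multiset ℝ) = i + 1 := by
    have hcard : Multiset.card (↑(L.take (i + 1)) : Multiset ℝ) = i + 1 := by
      simp only [Multiset.coe_card, List.length_take]
      omega
    refine Eq.trans (Multiset.countP_eq_card.mpr ?_) hcard
    intro a ha
    rw [Multiset.mem_coe, List.mem_iff_getElem] at ha
    obtain ⟨j, hj, hja⟩ := ha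
    have hjlen : j < L.length := by
      rw [List.length_take] at hj
      omega
    have hja' : L[j]'hjlen = a := by rw [← hja, List.getElem_take]
    have hji : j ≤ i := by rw [List.length_take] at hj; omega
    have hle : L.get ⟨i, hi⟩ ≤ L[j]'hjlen := by
      rcases Nat.lt_or_ge j i with hlt | hge
      · exact hs.rel_get_of_lt (by simpa using hlt)
      · have : j = i := by omega
        subst this
        simp
    rw [hja'] at hle
    exact lt_of_lt_of_le hcon hle
  rw [coe_split L (i + 1), Multiset.countP_add, h1] at h
  omega

/-- every finite weighted set contains a "top-k" subset -/
lemma exists_topk {α : Type} [DecidableEq α] (E : Finset α) (w : α → ℝ) :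
    ∀ (k : ℕ), k ≤ E.card → ∃ S : Finset α, S ⊆ E ∧ S.card = k ∧
      ∀ a ∈ S, ∀ b ∈ E, b ∉ S → w b ≤ w a := by
  intro k
  induction k with
  | zero => intro _; exact ⟨∅, Finset.empty_subset _, rfl, by simp⟩
  | succ j ih =>
    intro hk
    obtain ⟨S, hSE, hScard, hStop⟩ := ih (Nat.le_of_succ_le hk)
    have hne : (E \ S).Nonempty := by
      rw [← Finset.card_pos, Finset.card_sdiff_of_subset hSE]
      omega
    obtain ⟨a, ha, hamax⟩ := Finset.exists_max_image (E \ S) w hne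
    rw [Finset.mem_sdiff] at ha
    refine ⟨insert a S, ?_, ?_, ?_⟩
    · exact Finset.insert_subset ha.1 hSE
    · rw [Finset.card_insert_of_notMem ha.2, hScard]
    · intro a' ha' b hb hbS
      have hbS' : b ∉ S := fun hh => hbS (Finset.mem_insert_of_mem hh)
      rcases Finset.mem_insert.mp ha' with rfl | ha'S
      · exact hamax b (Finset.mem_sdiff.mpr ⟨hb, hbS'⟩)
      · exact hStop a' ha'S b hb hbS'


section metricgraph
variable {X : Type} [MetricSpace X] [Fintype X]

noncomputable def len : Sym2 X → ℝ := Sym2.lift ⟨fun x y => dist x y, fun _ _ => dist_comm _ _⟩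

lemma len_mk (x y : X) : len s(x, y) = dist x y := by simp [len]

lemma edgeLengths_eq (T : SimpleGraph X) :
    edgeLengths T = (T.edgeSet.toFinite.toFinset).val.map len := rfl

lemma graphLength_eq (T : SimpleGraph X) :
    graphLength T = ∑ e ∈ T.edgeSet.toFinite.toFinset, len e := rfl

/-- Lemma A core: a `δ`-separated surjection onto `Δ` forces at least `card Δ - 1`
edges of length `≥ δ` in any connected graph. -/
lemma countP_ge_of_separated (T : SimpleGraph X) (hT : T.Connected)
    {Δ : Type} [Fintype Δ] (c : X → Δ) (hc : Function.Surjective c) (δ : ℝ)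
    (hsep : ∀ x y : X, c x ≠ c y → δ ≤ dist x y) :
    Fintype.card Δ ≤ Multiset.countP (fun t => δ ≤ t) (edgeLengths T) + 1 := by
  classical
  set E := T.edgeSet.toFinite.toFinset with hE
  set F := E.filter (fun e => ¬ (Sym2.map c e).IsDiag) with hF
  -- `c` is constant on components of `T` minus the crossing edges
  have hconst : ∀ {u v : X}, (T.deleteEdges ↑F).Reachable u v → c u = c v := by
    intro u v hr
    obtain ⟨w⟩ := hr
    induction w with
    | nil => rfl
    | @cons u w v ha _ ih =>
      rw [deleteEdges_adj] at ha
      have h1 : s(u, w) ∈ E := (Set.Finite.mem_toFinset _).mpr (T.mem_edgeSet.mpr ha.1)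
      have h2 : (Sym2.map c s(u, w)).IsDiag := by
        by_contra hcon
        exact ha.2 (by rw [Finset.mem_coe, hF, Finset.mem_filter]; exact ⟨h1, hcon⟩)
      rw [Sym2.map_pair_eq, Sym2.mk_isDiag_iff] at h2
      exact h2.trans ih
  letI : Fintype (T.deleteEdges ↑F).ConnectedComponent := Fintype.ofFinite _
  -- components surject onto Δ
  have hsurj : Function.Surjective
      (fun C : (T.deleteEdges ↑F).ConnectedComponent => c C.out) := by
    intro i
    obtain ⟨x, hx⟩ := hc i
    refine ⟨(T.deleteEdges ↑F).connectedComponentMk x, ?_⟩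
    have : (T.deleteEdges ↑F).connectedComponentMk
        ((T.deleteEdges ↑F).connectedComponentMk x).out =
        (T.deleteEdges ↑F).connectedComponentMk x := Quot.out_eq _
    rw [ConnectedComponent.eq] at this
    exact (hconst this).trans hx
  have hcardΔ : Fintype.card Δ ≤ Fintype.card (T.deleteEdges ↑F).ConnectedComponent :=
    Fintype.card_le_of_surjective _ hsurj
  have hcc := card_cc_deleteEdges_le T hT F
  -- crossing edges have length ≥ δ
  have hFsub : F ⊆ E.filter (fun e => δ ≤ len e) := by
    intro e he
    rw [hF, Finset.mem_filter] at he
    obtain ⟨heE, hcross⟩ := he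
    rw [Finset.mem_filter]
    refine ⟨heE, ?_⟩
    induction e with
    | _ x y =>
    rw [Sym2.map_pair_eq, Sym2.mk_isDiag_iff] at hcross
    rw [len_mk]
    exact hsep x y hcross
  have hcount : F.card ≤ Multiset.countP (fun t => δ ≤ t) (edgeLengths T) := by
    rw [edgeLengths_eq, Multiset.countP_map]
    calc F.card ≤ (E.filter (fun e => δ ≤ len e)).card := Finset.card_le_card hFsub
      _ = Multiset.card (Multiset.filter (fun e => δ ≤ len e) E.val) := rfl
  omega

/-- Existence of a separated surjective partition map from deleting `S` edges of a tree. -/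
lemma exists_partition (T : SimpleGraph X) (htree : T.IsTree) {Δ : Type} [Fintype Δ]
    [Nonempty Δ]
    (S : Finset (Sym2 X)) (hSE : ↑S ⊆ T.edgeSet)
    (hcard : Fintype.card Δ ≤ S.card + 1) :
    ∃ c : X → Δ, Function.Surjective c ∧
      ∀ x y : X, c x ≠ c y → ¬ (T.deleteEdges ↑S).Reachable x y := by
  classical
  letI : Fintype (T.deleteEdges ↑S).ConnectedComponent := Fintype.ofFinite _
  have hge := card_cc_deleteEdges_ge T htree S hSE
  have hcard' : Fintype.card Δ ≤ Fintype.card (T.deleteEdges ↑S).ConnectedComponent :=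
    le_trans hcard hge
  obtain ⟨ι⟩ := Function.Embedding.nonempty_of_card_le hcard'
  refine ⟨fun x => Function.invFun ι ((T.deleteEdges ↑S).connectedComponentMk x), ?_, ?_⟩
  · intro i
    refine ⟨(ι i).out, ?_⟩
    have h1 : (T.deleteEdges ↑S).connectedComponentMk (ι i).out = ι i := Quot.out_eq _
    show Function.invFun ι ((T.deleteEdges ↑S).connectedComponentMk (ι i).out) = i
    rw [h1]
    exact Function.leftInverse_invFun ι.injective i
  · intro x y hne hr
    exact hne (congrArg _ (ConnectedComponent.eq.mpr hr))
end metricgraph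

section mst
variable {X : Type} [MetricSpace X] [Fintype X]

/-- the key MST property: points in different components after deleting a set `S` of
edges, all of length `≥ σ`, are at distance `≥ σ`. -/
lemma mst_separation {T : SimpleGraph X} (hT : IsMST T) (S : Finset (Sym2 X))
    (hSE : ↑S ⊆ T.edgeSet) (σ : ℝ) (hSlen : ∀ e ∈ S, σ ≤ len e) {x y : X}
    (hnr : ¬ (T.deleteEdges ↑S).Reachable x y) : σ ≤ dist x y := by
  classical
  by_contra hcon
  push_neg at hcon
  have hnexy : x ≠ y := fun h => hnr (h ▸ Reachable.refl x)
  -- x and y are not adjacent in T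
  have hnadj : ¬ T.Adj x y := by
    intro hadj
    by_cases hxyS : s(x, y) ∈ S
    · have := hSlen _ hxyS
      rw [len_mk] at this
      exact absurd hcon (not_lt.mpr this)
    · exact hnr (Adj.reachable (deleteEdges_adj.mpr ⟨hadj, hxyS⟩))
  -- the path from x to y in T
  obtain ⟨w⟩ := hT.1.isConnected.preconnected x y
  set p : T.Walk x y := ↑w.toPath with hpdef
  have hppath : p.IsPath := w.toPath.isPath
  -- it contains an edge of S
  have hpS : ∃ e ∈ p.edges, e ∈ S := by
    by_contra hall
    push_neg at hall
    have hsub : ∀ e ∈ p.edges, e ∈ (T.deleteEdges ↑S).edgeSet := by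
      intro e he
      rw [edgeSet_deleteEdges]
      exact ⟨p.edges_subset_edgeSet he, hall e he⟩
    exact hnr ⟨p.transfer _ hsub⟩
  obtain ⟨e, hep, heS⟩ := hpS
  induction e using Sym2.ind with
  | _ a b =>
  -- exchange the edge
  have htree' := tree_exchange hT.1 p hppath hep hnadj hnexy
  set T' := (T.deleteEdges {s(a, b)}) ⊔ fromEdgeSet {s(x, y)} with hT'def
  have hlen := hT.2 T' htree'
  -- compute the edge set of T'
  have habT : s(a, b) ∈ T.edgeSet := p.edges_subset_edgeSet hep
  have hxyT : s(x, y) ∉ T.edgeSet := fun h => hnadj (T.mem_edgeSet.mp h)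
  have hEeq : T'.edgeSet.toFinite.toFinset =
      insert s(x, y) ((T.edgeSet.toFinite.toFinset).erase s(a, b)) := by
    ext g
    rw [Set.Finite.mem_toFinset, Finset.mem_insert, Finset.mem_erase,
      Set.Finite.mem_toFinset, hT'def, edgeSet_sup, edgeSet_deleteEdges, edgeSet_fromEdgeSet]
    constructor
    · rintro (⟨h1, h2⟩ | ⟨h1, _⟩)
      · exact Or.inr ⟨by simpa using h2, h1⟩
      · exact Or.inl (by simpa using h1)
    · rintro (rfl | ⟨h1, h2⟩)
      · refine Or.inr ⟨rfl, ?_⟩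
        simp only [Sym2.mem_diagSet, Sym2.mk_isDiag_iff]
        exact hnexy
      · exact Or.inl ⟨h2, by simpa using h1⟩
  have hne_ab_xy : s(a, b) ≠ s(x, y) := by
    intro h
    exact hxyT (h ▸ habT)
  have hxy_not : s(x, y) ∉ (T.edgeSet.toFinite.toFinset).erase s(a, b) := by
    rw [Finset.mem_erase, Set.Finite.mem_toFinset]
    rintro ⟨_, h⟩
    exact hxyT h
  have hab_mem : s(a, b) ∈ T.edgeSet.toFinite.toFinset := (Set.Finite.mem_toFinset _).mpr habT
  have hsum' : graphLength T' = len s(x, y) +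
      (∑ e ∈ (T.edgeSet.toFinite.toFinset).erase s(a, b), len e) := by
    rw [graphLength_eq, hEeq, Finset.sum_insert hxy_not]
  have hsum : graphLength T = len s(a, b) +
      (∑ e ∈ (T.edgeSet.toFinite.toFinset).erase s(a, b), len e) := by
    rw [graphLength_eq, ← Finset.add_sum_erase _ _ hab_mem]
  rw [hsum, hsum'] at hlen
  have h1 : len s(a, b) ≤ len s(x, y) := by linarith
  have h2 : σ ≤ len s(a, b) := hSlen _ heS
  rw [len_mk] at h1
  exact absurd (le_trans h2 h1) (not_le.mpr hcon)
end mst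


lemma gh_le_of_glue {Δ X : Type} [MetricSpace Δ] [Fintype Δ] [Nonempty Δ]
    [MetricSpace X] [Fintype X] [Nonempty X] (ε : ℝ) (hε : 0 < ε) (c : X → Δ)
    (hc : Function.Surjective c)
    (H : ∀ p q : X, |dist (c p) (c q) - dist p q| ≤ 2 * ε) :
    GromovHausdorff.ghDist Δ X ≤ ε := by
  letI M : MetricSpace (Δ ⊕ X) := glueMetricApprox c (id : X → X) ε hε (by simpa using H)
  have hinl : Isometry (Sum.inl : Δ → Δ ⊕ X) := Isometry.of_dist_eq fun a b => rfl
  have hinr : Isometry (Sum.inr : X → Δ ⊕ X) := Isometry.of_dist_eq fun a b => rfl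
  have hglue : ∀ x : X, dist (Sum.inl (c x) : Δ ⊕ X) (Sum.inr x) = ε := fun x =>
    glueDist_glued_points c (id : X → X) ε x
  have hH : hausdorffDist (Set.range (Sum.inl : Δ → Δ ⊕ X))
      (Set.range (Sum.inr : X → Δ ⊕ X)) ≤ ε := by
    apply hausdorffDist_le_of_mem_dist hε.le
    · rintro z ⟨i, rfl⟩
      obtain ⟨x, rfl⟩ := hc i
      exact ⟨Sum.inr x, Set.mem_range_self _, le_of_eq (hglue x)⟩
    · rintro z ⟨x, rfl⟩
      refine ⟨Sum.inl (c x), Set.mem_range_self _, ?_⟩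
      rw [_root_.dist_comm]
      exact le_of_eq (hglue x)
  exact le_trans (ghDist_le_hausdorffDist hinl hinr) hH


/-- Let `X` be a finite metric space with `m ≥ 2` points and mst-spectrum
`σ₁ ≥ … ≥ σ_{m−1}` (the descending vector of edge lengths of a minimal spanning tree).
Then for every `l ≥ 2 diam X` and every `1 ≤ k ≤ m − 1`,
`2 d_GH(lΔ_{k+1}, X) = l − σ_k`. -/
theorem two_ghDist_simplex_eq_sub_mst_spectrum (X : Type) [MetricSpace X] [Fintype X] [Nonempty X]
    (hm : 2 ≤ Fintype.card X) (T : SimpleGraph X) (hT : IsMST T) (σ : ℕ → ℝ)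
    (hσ : (edgeLengths T).sort (· ≥ ·) =
      (List.range (Fintype.card X - 1)).map (fun i => σ (i + 1)))
    (l : ℝ) (hl : 2 * Metric.diam (Set.univ : Set X) ≤ l)
    (k : ℕ) (hk1 : 1 ≤ k) (hk : k ≤ Fintype.card X - 1)
    (Δ : Type) [MetricSpace Δ] [Fintype Δ] [Nonempty Δ] (hΔ : IsSimplexOf Δ (k + 1) l) :
    2 * GromovHausdorff.ghDist Δ X = l - σ k := by
  classical
  set m := Fintype.card X with hm_def
  set L := (edgeLengths T).sort (· ≥ ·) with hL_def
  have hLlen : L.length = m - 1 := by rw [hσ]; simp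
  have hik : k - 1 < L.length := by omega
  have hσk : L.get ⟨k - 1, hik⟩ = σ k := by
    simp only [List.get_eq_getElem]
    rw [List.getElem_of_eq hσ hik, List.getElem_map, List.getElem_range]
    congr 1
    omega
  have hLcoe : (↑L : Multiset ℝ) = edgeLengths T := Multiset.sort_eq _ _
  have hsorted : L.Pairwise (· ≥ ·) := Multiset.pairwise_sort _ _
  set E := T.edgeSet.toFinite.toFinset with hE_def
  have hcard_len : Multiset.card (edgeLengths T) = E.card := by
    rw [edgeLengths_eq, Multiset.card_map]
    rfl
  have hEcard : E.card = m - 1 := by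
    rw [← hcard_len, ← hLcoe]
    simpa using hLlen
  have hbounded : Bornology.IsBounded (Set.univ : Set X) := Set.finite_univ.isBounded
  have hdiam : ∀ p q : X, dist p q ≤ Metric.diam (Set.univ : Set X) := fun p q =>
    Metric.dist_le_diam_of_mem hbounded (Set.mem_univ p) (Set.mem_univ q)
  have hσk_mem : σ k ∈ edgeLengths T := by
    rw [← hLcoe]
    rw [← hσk]
    exact Multiset.mem_coe.mpr (L.get_mem _)
  have hσk_props : 0 < σ k ∧ σ k ≤ Metric.diam (Set.univ : Set X) := by
    rw [edgeLengths_eq, Multiset.mem_map] at hσk_mem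
    obtain ⟨e, heE, helen⟩ := hσk_mem
    induction e using Sym2.ind with
    | _ a b =>
    have hab : T.Adj a b := T.mem_edgeSet.mp ((Set.Finite.mem_toFinset _).mp heE)
    have : dist a b = σ k := by rw [← helen]; simp [len]
    constructor
    · rw [← this]; exact dist_pos.mpr hab.ne
    · rw [← this]; exact hdiam a b
  obtain ⟨hσk_pos, hσk_diam⟩ := hσk_props
  have hdiam_pos : 0 < Metric.diam (Set.univ : Set X) := by
    obtain ⟨x0, y0, hne⟩ := Fintype.exists_pair_of_one_lt_card (by omega : 1 < Fintype.card X)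
    exact lt_of_lt_of_le (dist_pos.mpr hne) (hdiam x0 y0)
  have hlσ : 0 < l - σ k := by linarith
  -- upper bound
  have hkE : k ≤ E.card := by omega
  obtain ⟨S, hSE, hScard, hStop⟩ := exists_topk E len k hkE
  have hSlen : ∀ e ∈ S, σ k ≤ len e := by
    intro e heS
    have hcount : Multiset.countP (fun t => len e < t) (edgeLengths T) ≤ k - 1 := by
      rw [edgeLengths_eq, Multiset.countP_map]
      have hsub : E.filter (fun g => len e < len g) ⊆ S.erase e := by
        intro g hg
        rw [Finset.mem_filter] at hg
        rw [Finset.mem_erase]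
        have hgS : g ∈ S := by
          by_contra hgS
          exact absurd (hStop e heS g hg.1 hgS) (not_le.mpr hg.2)
        exact ⟨fun hh => absurd hg.2 (by rw [hh]; exact lt_irrefl _), hgS⟩
      calc Multiset.card (Multiset.filter (fun g => len e < len g) E.val)
          = (E.filter (fun g => len e < len g)).card := rfl
        _ ≤ (S.erase e).card := Finset.card_le_card hsub
        _ = k - 1 := by rw [Finset.card_erase_of_mem heS, hScard]
    have := sorted_le_of_countP_le L hsorted (k - 1) hik (len e)
      (by rw [hLcoe]; exact hcount)
    rwa [hσk] at this
  have hSsub : ↑S ⊆ T.edgeSet := by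
    intro e he
    exact (Set.Finite.mem_toFinset _).mp (hSE he)
  have hcardΔ : Fintype.card Δ ≤ S.card + 1 := by rw [hΔ.1, hScard]
  obtain ⟨c, hcsurj, hcsep⟩ := exists_partition T hT.1 S hSsub hcardΔ
  have hsep : ∀ x y : X, c x ≠ c y → σ k ≤ dist x y := fun x y h =>
    mst_separation hT S hSsub (σ k) hSlen (hcsep x y h)
  set ε := (l - σ k) / 2 with hε_def
  have hε : 0 < ε := by rw [hε_def]; linarith
  have H : ∀ p q : X, |dist (c p) (c q) - dist p q| ≤ 2 * ε := by
    intro p q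
    have h2ε : 2 * ε = l - σ k := by rw [hε_def]; ring
    by_cases hpq : c p = c q
    · rw [hpq, _root_.dist_self, zero_sub, abs_neg, abs_of_nonneg dist_nonneg, h2ε]
      linarith [hdiam p q]
    · rw [hΔ.2 _ _ hpq, abs_of_nonneg (by linarith [hdiam p q] : (0:ℝ) ≤ l - dist p q), h2ε]
      linarith [hsep p q hpq]
  have hUB : GromovHausdorff.ghDist Δ X ≤ ε := gh_le_of_glue ε hε c hcsurj H
  -- lower bound
  set r := GromovHausdorff.ghDist Δ X with hr_def
  have h2rlt : 2 * r < l := by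
    have : 2 * r ≤ l - σ k := by rw [hε_def] at hUB; linarith
    linarith
  set fl := GromovHausdorff.optimalGHInjl Δ X with hfl_def
  set fr := GromovHausdorff.optimalGHInjr Δ X with hfr_def
  have hisol : Isometry fl := GromovHausdorff.isometry_optimalGHInjl Δ X
  have hisor : Isometry fr := GromovHausdorff.isometry_optimalGHInjr Δ X
  have hhd : Metric.hausdorffDist (Set.range fl) (Set.range fr) = r :=
    GromovHausdorff.hausdorffDist_optimal
  have hne1 : (Set.range fl).Nonempty := Set.range_nonempty _
  have hne2 : (Set.range fr).Nonempty := Set.range_nonempty _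
  have hedne : EMetric.hausdorffEdist (Set.range fl) (Set.range fr) ≠ ⊤ :=
    Metric.hausdorffEdist_ne_top_of_nonempty_of_bounded hne1 hne2
      (Set.finite_range fl).isBounded (Set.finite_range fr).isBounded
  have hX : ∀ x : X, ∃ i : Δ, dist (fl i) (fr x) ≤ r := by
    intro x
    have h1 : Metric.infDist (fr x) (Set.range fl) ≤ r := by
      have := Metric.infDist_le_hausdorffDist_of_mem (t := Set.range fl) (Set.mem_range_self x)
        (by rw [Metric.hausdorffEDist_comm]; exact hedne)
      rwa [Metric.hausdorffDist_comm, hhd] at this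
    obtain ⟨y, hy, heq⟩ := (Set.finite_range fl).isCompact.exists_infDist_eq_dist hne1 (fr x)
    obtain ⟨i, rfl⟩ := hy
    rw [heq] at h1
    exact ⟨i, by rwa [_root_.dist_comm]⟩
  have hΔx : ∀ i : Δ, ∃ x : X, dist (fl i) (fr x) ≤ r := by
    intro i
    have h1 : Metric.infDist (fl i) (Set.range fr) ≤ r := by
      have := Metric.infDist_le_hausdorffDist_of_mem (Set.mem_range_self i) hedne
      rwa [hhd] at this
    obtain ⟨y, hy, heq⟩ := (Set.finite_range fr).isCompact.exists_infDist_eq_dist hne2 (fl i)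
    obtain ⟨x, rfl⟩ := hy
    rw [heq] at h1
    exact ⟨x, h1⟩
  set c' : X → Δ := fun x => (hX x).choose with hc'_def
  have hc'spec : ∀ x : X, dist (fl (c' x)) (fr x) ≤ r := fun x => (hX x).choose_spec
  have huniq : ∀ (x : X) (i : Δ), dist (fl i) (fr x) ≤ r → c' x = i := by
    intro x i hi
    by_contra hne
    have h1 : dist (fl (c' x)) (fl i) ≤ 2 * r := by
      calc dist (fl (c' x)) (fl i) ≤ dist (fl (c' x)) (fr x) + dist (fr x) (fl i) :=
            dist_triangle _ _ _
        _ ≤ r + r := add_le_add (hc'spec x) (by rwa [_root_.dist_comm])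
        _ = 2 * r := by ring
    rw [hisol.dist_eq, hΔ.2 _ _ hne] at h1
    linarith
  have hc'surj : Function.Surjective c' := fun i =>
    ⟨(hΔx i).choose, huniq _ _ (hΔx i).choose_spec⟩
  have hsep' : ∀ x y : X, c' x ≠ c' y → l - 2 * r ≤ dist x y := by
    intro x y hne
    have hl' : dist (fl (c' x)) (fl (c' y)) = l := by
      rw [hisol.dist_eq, hΔ.2 _ _ hne]
    have htri : dist (fl (c' x)) (fl (c' y)) ≤
        dist (fl (c' x)) (fr x) + dist (fr x) (fr y) + dist (fr y) (fl (c' y)) :=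
      dist_triangle4 _ _ _ _
    have hxy : dist (fr x) (fr y) = dist x y := hisor.dist_eq x y
    have h2 : dist (fr y) (fl (c' y)) ≤ r := by rw [_root_.dist_comm]; exact hc'spec y
    have h3 := hc'spec x
    linarith
  have hA := countP_ge_of_separated T hT.1.isConnected c' hc'surj (l - 2 * r) hsep'
  rw [hΔ.1] at hA
  have hcount' : (k - 1) + 1 ≤
      Multiset.countP (fun t => l - 2 * r ≤ t) (↑L : Multiset ℝ) := by
    rw [hLcoe]
    omega
  have hLB := sorted_ge_of_countP_ge L hsorted (k - 1) hik (l - 2 * r) hcount'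
  rw [hσk] at hLB
  -- conclude
  rw [hε_def] at hUB
  linarith
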